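/- Suppose a₁/q₁ < a₂/q₂ with 0 < a₁ < q₁, 0 < a₂ < q₂, and a₂q₁ - a₁q₂ = 1. Define h(a/q) = q + a + ā where ā is the multiplicative inverse of a mod q in [1, q). Let q̄₂ be the multiplicative inverse of q₂ mod q₁ in [1, q₁). Then h(a₂/q₂) = q₁ + (2 - ⌊q₁/q₂⌋)·q₂ - (q₂·q̄₂ - 1)/q₁. -/
import Mathlib


theorem stmt_4 (a₁ q₁ a₂ q₂ ab₂ qb₂ : ℤ)
    (ha₁ : 0 < a₁) (ha₁q : a₁ < q₁) (ha₂ : 0 < a₂) (ha₂q : a₂ < q₂)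
    (hlt : (a₁ : ℚ) / q₁ < (a₂ : ℚ) / q₂)
    (huni : a₂ * q₁ - a₁ * q₂ = 1)
    (hi1 : 1 ≤ ab₂) (hi2 : ab₂ < q₂) (hinv : a₂ * ab₂ ≡ 1 [ZMOD q₂])
    (hb1 : 1 ≤ qb₂) (hb2 : qb₂ < q₁) (hbinv : q₂ * qb₂ ≡ 1 [ZMOD q₁]) :
    q₂ + a₂ + ab₂ = q₁ + (2 - q₁ / q₂) * q₂ - (q₂ * qb₂ - 1) / q₁ := by
  have h1 : q₁ ∣ q₂ * qb₂ - 1 := Int.ModEq.dvd hbinv.symm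
  have h3 : q₂ ∣ a₂ * ab₂ - 1 := Int.ModEq.dvd hinv.symm
  obtain ⟨k, hk⟩ := h1
  obtain ⟨k', hk'⟩ := h3
  -- qb₂ = q₁ - a₁
  have h2 : qb₂ + a₁ = q₁ * (a₂ * qb₂ - a₁ * k) := by linear_combination -qb₂ * huni - a₁ * hk
  have hqb : qb₂ = q₁ - a₁ := by
    set m := a₂ * qb₂ - a₁ * k with hm
    have hm1 : 0 < m := by nlinarith
    have hm2 : m < 2 := by nlinarith
    have : m = 1 := by omega
    rw [this] at h2; omega
  -- ab₂ = q₁ mod q₂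
  have h4 : q₁ - ab₂ = q₂ * (a₁ * ab₂ - q₁ * k') := by linear_combination ab₂ * huni - q₁ * hk'
  set n := a₁ * ab₂ - q₁ * k' with hn
  have hdiv : q₁ / q₂ = n := by
    have hq₁ : q₁ = ab₂ + q₂ * n := by omega
    rw [hq₁, Int.add_mul_ediv_left _ _ (by omega : q₂ ≠ 0),
      Int.ediv_eq_zero_of_lt (by omega) hi2, zero_add]
  have hdiv2 : (q₂ * qb₂ - 1) / q₁ = q₂ - a₂ := by
    have : q₂ * qb₂ - 1 = q₁ * (q₂ - a₂) := by rw [hqb]; linear_combination huni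
    rw [this, Int.mul_ediv_cancel_left _ (by omega : q₁ ≠ 0)]
  rw [hdiv, hdiv2]
  linear_combination -h4
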